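/- arXiv:2101.01633 — 2 statements merged into one kernel-verified Lean document; each statement's English description precedes it below -/
import Mathlib

section
/- Let G be a group of particles in ℝ³ with total weight ρ > 0, drift velocity V, pressure tensor P with three positive eigenvalues λ₁, λ₂, λ₃ and orthonormal eigenvectors Θ₁, Θ₂, Θ₃ chosen so that q̂_i = Θ_iᵀ q > 0, where q is the central heat flux. Define γ_i = (√ρ q̂_i)/(√3 λ_i^{3/2}) + √(1 + ρ q̂_i²/(3 λ_i³)), and the six particles ṽ_i = V + γ_i √(3λ_i/ρ) Θ_i with g̃_i = (ρ/3)/(1+γ_i²), and ṽ_{i+3} = V − (1/γ_i)√(3λ_i/ρ) Θ_i with g̃_{i+3} = (ρ/3)γ_i²/(1+γ_i²), for i = 1,2,3. Then the reduced six-particle system has the same total weight ρ, momentum ρV, pressure tensor P, and central heat flux q as G. -/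
open Matrix Finset

set_option maxHeartbeats 1000000

/-- the six-particle reduction of the pressure-tensor-and-heat-flux
scheme conserves the total weight, momentum, pressure tensor and central heat
flux of the group. -/
theorem six_particle_reduction_conserves_moments
    (m : ℕ) (g : Fin m → ℝ) (v : Fin m → Fin 3 → ℝ)
    (hg : ∀ i, 0 < g i)
    (ρ : ℝ) (hρdef : ρ = ∑ i, g i) (hρ : 0 < ρ)
    (V : Fin 3 → ℝ) (hV : ∑ i, g i • v i = ρ • V)
    (P : Matrix (Fin 3) (Fin 3) ℝ)
    (hP : P = ∑ i, g i • vecMulVec (v i - V) (v i - V))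
    (q : Fin 3 → ℝ)
    (hq : q = (1/2 : ℝ) • ∑ i, (g i * ∑ a, (v i a - V a)^2) • (v i - V))
    -- spectral data of P: positive eigenvalues and orthonormal eigenvectors
    (lam : Fin 3 → ℝ) (hlam : ∀ i, 0 < lam i)
    (Θ : Fin 3 → Fin 3 → ℝ)
    (hortho : ∀ i j, Θ i ⬝ᵥ Θ j = if i = j then (1:ℝ) else 0)
    (hspec : P = ∑ i, lam i • vecMulVec (Θ i) (Θ i))
    -- the eigenvectors are oriented so that q̂_i = Θ_iᵀ q > 0
    (qh : Fin 3 → ℝ) (hqh : ∀ i, qh i = Θ i ⬝ᵥ q) (hqhpos : ∀ i, 0 < qh i)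
    -- parameters of the scheme
    (γ : Fin 3 → ℝ)
    (hγ : ∀ i, γ i = (Real.sqrt ρ * qh i) / (Real.sqrt 3 * (lam i) ^ ((3:ℝ)/2))
        + Real.sqrt (1 + ρ * (qh i)^2 / (3 * (lam i)^3)))
    -- the six reduced particles (as three pairs)
    (tg1 tg2 : Fin 3 → ℝ) (tv1 tv2 : Fin 3 → Fin 3 → ℝ)
    (htg1 : ∀ i, tg1 i = (ρ/3) * (1 / (1 + (γ i)^2)))
    (htg2 : ∀ i, tg2 i = (ρ/3) * ((γ i)^2 / (1 + (γ i)^2)))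
    (htv1 : ∀ i, tv1 i = V + (γ i * Real.sqrt (3 * lam i / ρ)) • Θ i)
    (htv2 : ∀ i, tv2 i = V - ((1 / γ i) * Real.sqrt (3 * lam i / ρ)) • Θ i) :
    -- total weight
    (∑ i, (tg1 i + tg2 i) = ρ) ∧
    -- momentum
    (∑ i, (tg1 i • tv1 i + tg2 i • tv2 i) = ρ • V) ∧
    -- pressure tensor
    (∑ i, (tg1 i • vecMulVec (tv1 i - V) (tv1 i - V)
         + tg2 i • vecMulVec (tv2 i - V) (tv2 i - V)) = P) ∧
    -- central heat flux
    ((1/2 : ℝ) • ∑ i, ((tg1 i * ∑ a, (tv1 i a - V a)^2) • (tv1 i - V)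
         + (tg2 i * ∑ a, (tv2 i a - V a)^2) • (tv2 i - V)) = q) := by
  have hsρ : (0:ℝ) < Real.sqrt ρ := Real.sqrt_pos.mpr hρ
  have hs3 : (0:ℝ) < Real.sqrt 3 := Real.sqrt_pos.mpr (by norm_num)
  have hslam : ∀ i, (0:ℝ) < Real.sqrt (lam i) := fun i => Real.sqrt_pos.mpr (hlam i)
  -- the auxiliary scalar s
  set s : Fin 3 → ℝ := fun i =>
    Real.sqrt ρ * qh i / (Real.sqrt 3 * (lam i * Real.sqrt (lam i))) with hs_def
  have hspos : ∀ i, 0 < s i := by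
    intro i
    apply div_pos (mul_pos hsρ (hqhpos i)) (mul_pos hs3 (mul_pos (hlam i) (hslam i)))
  have hssq : ∀ i, (s i)^2 = ρ * (qh i)^2 / (3 * (lam i)^3) := by
    intro i
    simp only [hs_def]
    rw [div_pow, mul_pow, mul_pow, mul_pow, Real.sq_sqrt hρ.le,
      Real.sq_sqrt (by norm_num : (0:ℝ) ≤ 3), Real.sq_sqrt (hlam i).le]
    ring_nf
  have hγs : ∀ i, γ i = s i + Real.sqrt (1 + (s i)^2) := by
    intro i
    rw [hγ i, hssq i]
    congr 1
    rw [show (3:ℝ)/2 = 1 + 1/2 by norm_num, Real.rpow_add (hlam i), Real.rpow_one,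
      ← Real.sqrt_eq_rpow]
  have hγpos : ∀ i, 0 < γ i := by
    intro i
    rw [hγs i]
    have : (0:ℝ) < Real.sqrt (1 + (s i)^2) := Real.sqrt_pos.mpr (by positivity)
    linarith [hspos i]
  have hγ0 : ∀ i, γ i ≠ 0 := fun i => (hγpos i).ne'
  have h1γ : ∀ i, (1:ℝ) + (γ i)^2 ≠ 0 := fun i => by positivity
  have hγrel : ∀ i, (γ i)^2 = 2 * s i * γ i + 1 := by
    intro i
    have h1 : (0:ℝ) ≤ 1 + (s i)^2 := by positivity
    rw [hγs i]
    nlinarith [Real.sq_sqrt h1]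
  -- the speed scale c
  have hcpos : ∀ i, (0:ℝ) < Real.sqrt (3 * lam i / ρ) := by
    intro i
    have h1 := hlam i
    apply Real.sqrt_pos.mpr
    positivity
  have hc2 : ∀ i, (Real.sqrt (3 * lam i / ρ))^2 = 3 * lam i / ρ := by
    intro i
    have h1 := hlam i
    exact Real.sq_sqrt (by positivity)
  have hqkey : ∀ i, (ρ/3) * (Real.sqrt (3 * lam i / ρ))^3 * s i = qh i := by
    intro i
    have hsq : ((ρ/3) * (Real.sqrt (3 * lam i / ρ))^3 * s i)^2 = (qh i)^2 := by
      have e1 : ((ρ/3) * (Real.sqrt (3 * lam i / ρ))^3 * s i)^2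
          = (ρ/3)^2 * ((Real.sqrt (3 * lam i / ρ))^2)^3 * (s i)^2 := by ring
      rw [e1, hc2 i, hssq i]
      field_simp [hρ.ne', (hlam i).ne']
    have h1 : 0 < (ρ/3) * (Real.sqrt (3 * lam i / ρ))^3 * s i := by
      have h2 := hcpos i
      have h3 := hspos i
      positivity
    nlinarith [hsq, h1, hqhpos i]
  -- the four scalar conservation identities (per pair)
  have key1 : ∀ i, tg1 i + tg2 i = ρ/3 := by
    intro i
    rw [htg1 i, htg2 i]
    field_simp [h1γ i]
  have key2 : ∀ i, tg1 i * (γ i * Real.sqrt (3 * lam i / ρ))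
      - tg2 i * ((1 / γ i) * Real.sqrt (3 * lam i / ρ)) = 0 := by
    intro i
    rw [htg1 i, htg2 i]
    set c := Real.sqrt (3 * lam i / ρ) with hc_def
    field_simp [hγ0 i, h1γ i]
    ring
  have key3 : ∀ i, tg1 i * (γ i * Real.sqrt (3 * lam i / ρ))^2
      + tg2 i * ((1 / γ i) * Real.sqrt (3 * lam i / ρ))^2 = lam i := by
    intro i
    rw [htg1 i, htg2 i, mul_pow, mul_pow, hc2 i]
    field_simp [hγ0 i, h1γ i, hρ.ne']
    ring
  have hγd : ∀ i, γ i - 1 / γ i = 2 * s i := by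
    intro i
    have h := hγrel i
    field_simp [hγ0 i]
    linarith [h]
  have key4 : ∀ i, tg1 i * (γ i * Real.sqrt (3 * lam i / ρ))^3
      - tg2 i * ((1 / γ i) * Real.sqrt (3 * lam i / ρ))^3 = 2 * qh i := by
    intro i
    have step : tg1 i * (γ i * Real.sqrt (3 * lam i / ρ))^3
        - tg2 i * ((1 / γ i) * Real.sqrt (3 * lam i / ρ))^3
        = (ρ/3) * (Real.sqrt (3 * lam i / ρ))^3 * (γ i - 1 / γ i) := by
      rw [htg1 i, htg2 i]
      set c := Real.sqrt (3 * lam i / ρ) with hc_def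
      field_simp [hγ0 i, h1γ i]
      ring
    rw [step, hγd i, ← hqkey i]
    ring
  -- completeness of the orthonormal basis
  have hcol : ∀ a b, ∑ i, Θ i a * Θ i b = if a = b then (1:ℝ) else 0 := by
    intro a b
    have hM : (Matrix.of Θ) * (Matrix.of Θ)ᵀ = 1 := by
      ext i j
      simpa [Matrix.mul_apply, dotProduct, Matrix.one_apply] using hortho i j
    have hM2 : (Matrix.of Θ)ᵀ * (Matrix.of Θ) = 1 := mul_eq_one_comm.mp hM
    have := congrFun (congrFun hM2 a) b
    simpa [Matrix.mul_apply, Matrix.one_apply] using this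
  have hcomp : ∑ i, qh i • Θ i = q := by
    funext a
    simp only [Finset.sum_apply, Pi.smul_apply, smul_eq_mul]
    calc ∑ i, qh i * Θ i a = ∑ i, ∑ b, Θ i a * Θ i b * q b := by
          apply Finset.sum_congr rfl
          intro i _
          rw [hqh i]
          simp only [dotProduct, Finset.mul_sum, Finset.sum_mul]
          apply Finset.sum_congr rfl
          intro b _
          ring
      _ = ∑ b, (∑ i, Θ i a * Θ i b) * q b := by
          rw [Finset.sum_comm]
          apply Finset.sum_congr rfl
          intro b _
          rw [Finset.sum_mul]
      _ = q a := by
          simp only [hcol]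
          simp
  refine ⟨?_, ?_, ?_, ?_⟩
  · -- total weight
    simp only [key1, Fin.sum_univ_three]
    ring
  · -- momentum
    have hmom : ∀ i, tg1 i • tv1 i + tg2 i • tv2 i = (ρ/3) • V := by
      intro i
      funext a
      rw [htv1 i, htv2 i]
      simp only [Pi.add_apply, Pi.sub_apply, Pi.smul_apply, smul_eq_mul]
      linear_combination V a * key1 i + Θ i a * key2 i
    simp only [hmom]
    funext a
    simp only [Fin.sum_univ_three, Pi.add_apply, Pi.smul_apply, smul_eq_mul]
    ring
  · -- pressure tensor
    rw [hspec]
    apply Finset.sum_congr rfl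
    intro i _
    ext x y
    rw [htv1 i, htv2 i]
    simp only [Matrix.add_apply, Matrix.smul_apply, vecMulVec_apply, Pi.add_apply,
      Pi.sub_apply, Pi.smul_apply, smul_eq_mul, add_sub_cancel_left, sub_sub_cancel_left, Pi.neg_apply]
    linear_combination (Θ i x * Θ i y) * key3 i
  · -- heat flux
    have hsq1 : ∀ i, (∑ a, (tv1 i a - V a)^2) = (γ i * Real.sqrt (3 * lam i / ρ))^2 := by
      intro i
      have hO : ∑ a, Θ i a * Θ i a = 1 := by
        have := hortho i i
        simpa [dotProduct] using this
      rw [htv1 i]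
      simp only [Pi.add_apply, Pi.smul_apply, smul_eq_mul, add_sub_cancel_left]
      calc ∑ a, (γ i * Real.sqrt (3 * lam i / ρ) * Θ i a)^2
          = (γ i * Real.sqrt (3 * lam i / ρ))^2 * ∑ a, Θ i a * Θ i a := by
            rw [Finset.mul_sum]
            apply Finset.sum_congr rfl
            intro a _
            ring
        _ = (γ i * Real.sqrt (3 * lam i / ρ))^2 := by rw [hO, mul_one]
    have hsq2 : ∀ i, (∑ a, (tv2 i a - V a)^2) = ((1 / γ i) * Real.sqrt (3 * lam i / ρ))^2 := by
      intro i
      have hO : ∑ a, Θ i a * Θ i a = 1 := by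
        have := hortho i i
        simpa [dotProduct] using this
      rw [htv2 i]
      simp only [Pi.sub_apply, Pi.smul_apply, smul_eq_mul, sub_sub_cancel_left, Pi.neg_apply]
      calc ∑ a, (-(1 / γ i * Real.sqrt (3 * lam i / ρ) * Θ i a))^2
          = ((1 / γ i) * Real.sqrt (3 * lam i / ρ))^2 * ∑ a, Θ i a * Θ i a := by
            rw [Finset.mul_sum]
            apply Finset.sum_congr rfl
            intro a _
            ring
        _ = ((1 / γ i) * Real.sqrt (3 * lam i / ρ))^2 := by rw [hO, mul_one]
    have hheat : ∀ i, (tg1 i * ∑ a, (tv1 i a - V a)^2) • (tv1 i - V)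
        + (tg2 i * ∑ a, (tv2 i a - V a)^2) • (tv2 i - V) = (2 * qh i) • Θ i := by
      intro i
      rw [hsq1 i, hsq2 i]
      funext x
      rw [htv1 i, htv2 i]
      simp only [Pi.add_apply, Pi.sub_apply, Pi.smul_apply, smul_eq_mul,
        add_sub_cancel_left, sub_sub_cancel_left, Pi.neg_apply]
      linear_combination Θ i x * key4 i
    simp only [hheat]
    rw [← hcomp, Finset.smul_sum]
    apply Finset.sum_congr rfl
    intro i _
    rw [smul_smul]
    congr 1
    ring
end

section
/- Let φ : ℝ³ → ℝ be bounded and Lipschitz with ‖φ‖_L = max{‖φ‖_∞, Lip(φ)}. For a group with particles (g_i, v_i), i = 1,…,m, total weight ρ = Σ g_i, drift V, temperature T with 3ρT = Σ g_i |v_i − V|², and reduced particles (g̃_j, ṽ_j), j = 1,…,6, given by the pressure-tensor-and-heat-flux scheme, one has |Σ_j g̃_j φ(ṽ_j) − Σ_i g_i φ(v_i)| ≤ ‖φ‖_L [Σ_i g_i |V − v_i| + ρ √(3T)]. -/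
open Finset

/-- the convergence-theorem inequality for the
pressure-tensor-and-heat-flux reduction scheme:
|Σ_j g̃_j φ(ṽ_j) − Σ_i g_i φ(v_i)| ≤ ‖φ‖_L [Σ_i g_i |V − v_i| + ρ√(3T)],
for φ bounded and Lipschitz with ‖φ‖_L = max{‖φ‖_∞, Lip(φ)}. -/
theorem reduction_scheme_convergence_inequality
    (φ : EuclideanSpace ℝ (Fin 3) → ℝ) (L : ℝ)
    (hφbdd : ∀ x, |φ x| ≤ L)
    (hφlip : ∀ x y, |φ x - φ y| ≤ L * ‖x - y‖)
    (m : ℕ) (g : Fin m → ℝ) (v : Fin m → EuclideanSpace ℝ (Fin 3))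
    (hg : ∀ i, 0 < g i)
    (ρ : ℝ) (hρdef : ρ = ∑ i, g i) (hρ : 0 < ρ)
    (V : EuclideanSpace ℝ (Fin 3)) (hV : ∑ i, g i • v i = ρ • V)
    (T : ℝ) (hT : 3 * ρ * T = ∑ i, g i * ‖v i - V‖^2)
    -- the six reduced particles of the pressure-tensor-and-heat-flux scheme:
    -- each moves relative to V, they carry the total weight ρ and reproduce
    -- the temperature, Σ_j g̃_j |ṽ_j − V|² = 3ρT
    (tg : Fin 6 → ℝ) (tv : Fin 6 → EuclideanSpace ℝ (Fin 3))
    (htg : ∀ j, 0 < tg j)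
    (htgsum : ∑ j, tg j = ρ)
    (htemp : ∑ j, tg j * ‖tv j - V‖^2 = 3 * ρ * T) :
    |(∑ j, tg j * φ (tv j)) - ∑ i, g i * φ (v i)|
      ≤ L * ((∑ i, g i * ‖V - v i‖) + ρ * Real.sqrt (3 * T)) := by

  have hL : 0 ≤ L := le_trans (abs_nonneg _) (hφbdd V)
  have h3T : 0 ≤ 3 * T := by nlinarith [Finset.sum_nonneg (fun j (_ : j ∈ Finset.univ) => mul_nonneg (htg j).le (sq_nonneg ‖tv j - V‖)), htemp]
  have hsq : Real.sqrt (3 * T) ^ 2 = 3 * T := Real.sq_sqrt h3T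
  -- Cauchy-Schwarz
  have cs : (∑ j, tg j * ‖tv j - V‖) ^ 2
      ≤ (∑ j, tg j) * (∑ j, tg j * ‖tv j - V‖ ^ 2) := by
    have := Finset.sum_mul_sq_le_sq_mul_sq Finset.univ
      (fun j => Real.sqrt (tg j)) (fun j => Real.sqrt (tg j) * ‖tv j - V‖)
    have e1 : ∀ j : Fin 6, Real.sqrt (tg j) * (Real.sqrt (tg j) * ‖tv j - V‖)
        = tg j * ‖tv j - V‖ := by
      intro j
      rw [← mul_assoc, Real.mul_self_sqrt (htg j).le]
    have e2 : ∀ j : Fin 6, Real.sqrt (tg j) ^ 2 = tg j := fun j => Real.sq_sqrt (htg j).le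
    have e3 : ∀ j : Fin 6, (Real.sqrt (tg j) * ‖tv j - V‖) ^ 2 = tg j * ‖tv j - V‖ ^ 2 := by
      intro j
      rw [mul_pow, e2]
    simpa [e1, e2, e3] using this
  have hcs2 : (∑ j, tg j * ‖tv j - V‖) ≤ ρ * Real.sqrt (3 * T) := by
    have hx : 0 ≤ ∑ j, tg j * ‖tv j - V‖ :=
      Finset.sum_nonneg fun j _ => mul_nonneg (htg j).le (norm_nonneg _)
    have hy : 0 ≤ ρ * Real.sqrt (3 * T) := mul_nonneg hρ.le (Real.sqrt_nonneg _)
    have h1 : (∑ j, tg j * ‖tv j - V‖) ^ 2 ≤ (ρ * Real.sqrt (3 * T)) ^ 2 := by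
      rw [mul_pow, hsq]
      calc (∑ j, tg j * ‖tv j - V‖) ^ 2
          ≤ (∑ j, tg j) * (∑ j, tg j * ‖tv j - V‖ ^ 2) := cs
        _ = ρ * (3 * ρ * T) := by rw [htgsum, htemp]
        _ = ρ ^ 2 * (3 * T) := by ring
    have := Real.sqrt_le_sqrt h1
    rwa [Real.sqrt_sq hx, Real.sqrt_sq hy] at this
  have hsplit : (∑ j, tg j * φ (tv j)) - ∑ i, g i * φ (v i)
      = (∑ j, tg j * (φ (tv j) - φ V)) + (∑ i, g i * (φ V - φ (v i))) := by
    have h1 : (∑ j, tg j * φ V) = ρ * φ V := by rw [← Finset.sum_mul, htgsum]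
    have h2 : (∑ i, g i * φ V) = ρ * φ V := by rw [← Finset.sum_mul, ← hρdef]
    simp only [mul_sub, Finset.sum_sub_distrib, h1, h2]
    ring
  have b1 : |∑ j, tg j * (φ (tv j) - φ V)| ≤ L * ∑ j, tg j * ‖tv j - V‖ := by
    calc |∑ j, tg j * (φ (tv j) - φ V)| ≤ ∑ j, |tg j * (φ (tv j) - φ V)| :=
          Finset.abs_sum_le_sum_abs _ _
      _ ≤ ∑ j, tg j * (L * ‖tv j - V‖) := by
          refine Finset.sum_le_sum fun j _ => ?_
          rw [abs_mul, abs_of_pos (htg j)]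
          exact mul_le_mul_of_nonneg_left (hφlip _ _) (htg j).le
      _ = L * ∑ j, tg j * ‖tv j - V‖ := by
          rw [Finset.mul_sum]; exact Finset.sum_congr rfl fun j _ => by ring
  have b2 : |∑ i, g i * (φ V - φ (v i))| ≤ L * ∑ i, g i * ‖V - v i‖ := by
    calc |∑ i, g i * (φ V - φ (v i))| ≤ ∑ i, |g i * (φ V - φ (v i))| :=
          Finset.abs_sum_le_sum_abs _ _
      _ ≤ ∑ i, g i * (L * ‖V - v i‖) := by
          refine Finset.sum_le_sum fun i _ => ?_
          rw [abs_mul, abs_of_pos (hg i)]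
          exact mul_le_mul_of_nonneg_left (hφlip _ _) (hg i).le
      _ = L * ∑ i, g i * ‖V - v i‖ := by
          rw [Finset.mul_sum]; exact Finset.sum_congr rfl fun i _ => by ring
  have := mul_le_mul_of_nonneg_left hcs2 hL
  calc |(∑ j, tg j * φ (tv j)) - ∑ i, g i * φ (v i)|
      = |(∑ j, tg j * (φ (tv j) - φ V)) + (∑ i, g i * (φ V - φ (v i)))| := by rw [hsplit]
    _ ≤ |∑ j, tg j * (φ (tv j) - φ V)| + |∑ i, g i * (φ V - φ (v i))| := abs_add_le _ _
    _ ≤ L * (∑ j, tg j * ‖tv j - V‖) + L * (∑ i, g i * ‖V - v i‖) := add_le_add b1 b2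
    _ ≤ L * ((∑ i, g i * ‖V - v i‖) + ρ * Real.sqrt (3 * T)) := by
        rw [mul_add]; linarith
end
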